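/- Let G be a locally compact second countable Hausdorff unimodular group with Haar measure μ_G, U an irreducible square-integrable unitary representation of G on a separable Hilbert space H (normalized so that the orthogonality constant is 1), and T a positive trace-one operator on H. Then the map E(X) = ∫_X U(g) T U(g)⁻¹ dμ_G(g) (weak integral over Borel sets X of G) defines a normalized positive operator valued measure based on G which is covariant: U(g₀)E(X)U(g₀)⁻¹ = E(g₀X) for all g₀ ∈ G and Borel X. -/

import Mathlib

open MeasureTheory Complex

noncomputable section

/-- Polarization identity for products of complex numbers. -/
private theorem conj_mul_eq_combo (z₁ z₂ : ℂ) : (starRingEnd ℂ) z₁ * z₂ =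
    (((‖z₁ + z₂‖ ^ 2 : ℝ) : ℂ) - ((‖z₁ - z₂‖ ^ 2 : ℝ) : ℂ) +
      (((‖z₁ - I * z₂‖ ^ 2 : ℝ) : ℂ) - ((‖z₁ + I * z₂‖ ^ 2 : ℝ) : ℂ)) * I) / 4 := by
  have hz : ∀ z : ℂ, ((‖z‖ ^ 2 : ℝ) : ℂ) = (starRingEnd ℂ) z * z := by
    intro z; rw [mul_comm, Complex.mul_conj']; norm_cast
  rw [hz, hz, hz, hz]
  simp only [map_add, map_sub, map_mul, Complex.conj_I]
  ring_nf
  simp only [Complex.I_sq]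
  ring

/-- Polarization identity for the inner ℂ product, with `Complex` coercions. -/
private theorem inner_eq_combo {H : Type*} [NormedAddCommGroup H] [InnerProductSpace ℂ H]
    (u v : H) : (inner ℂ u v : ℂ) = (((‖u + v‖ ^ 2 : ℝ) : ℂ) - ((‖u - v‖ ^ 2 : ℝ) : ℂ) +
      (((‖u - I • v‖ ^ 2 : ℝ) : ℂ) - ((‖u + I • v‖ ^ 2 : ℝ) : ℂ)) * I) / 4 := by
  have h := inner_eq_sum_norm_sq_div_four (𝕜 := ℂ) u v
  rw [show (RCLike.I : ℂ) = I from rfl] at h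
  rw [h]
  norm_cast

/-- Integral of a complex polarization combination of four real functions. -/
private theorem integral_combo {α : Type*} [MeasurableSpace α] {μ : Measure α}
    {c₁ c₂ c₃ c₄ : α → ℝ}
    (h₁ : Integrable c₁ μ) (h₂ : Integrable c₂ μ) (h₃ : Integrable c₃ μ)
    (h₄ : Integrable c₄ μ) :
    ∫ a, (((c₁ a : ℝ) : ℂ) - ((c₂ a : ℝ) : ℂ) +
        ((((c₃ a : ℝ) : ℂ)) - ((c₄ a : ℝ) : ℂ)) * I) / 4 ∂μ =
      (((∫ a, c₁ a ∂μ : ℝ) : ℂ) - ((∫ a, c₂ a ∂μ : ℝ) : ℂ) +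
        (((∫ a, c₃ a ∂μ : ℝ) : ℂ) - ((∫ a, c₄ a ∂μ : ℝ) : ℂ)) * I) / 4 := by
  have hsub12 : Integrable (fun a => ((c₁ a : ℝ) : ℂ) - ((c₂ a : ℝ) : ℂ)) μ :=
    h₁.ofReal.sub h₂.ofReal
  have hsub34 : Integrable (fun a => (((c₃ a : ℝ) : ℂ) - ((c₄ a : ℝ) : ℂ)) * I) μ :=
    (h₃.ofReal.sub h₄.ofReal).mul_const I
  have h₁' : Integrable (fun a => ((c₁ a : ℝ) : ℂ)) μ := h₁.ofReal
  have h₂' : Integrable (fun a => ((c₂ a : ℝ) : ℂ)) μ := h₂.ofReal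
  have h₃' : Integrable (fun a => ((c₃ a : ℝ) : ℂ)) μ := h₃.ofReal
  have h₄' : Integrable (fun a => ((c₄ a : ℝ) : ℂ)) μ := h₄.ofReal
  have hor : ∀ c : α → ℝ, ∫ a, ((c a : ℝ) : ℂ) ∂μ = ((∫ a, c a ∂μ : ℝ) : ℂ) := fun c =>
    integral_ofReal
  rw [integral_div, integral_add hsub12 hsub34,
    integral_sub h₁' h₂', integral_mul_const,
    integral_sub h₃' h₄',
    hor c₁, hor c₂, hor c₃, hor c₄]

/-- The elementary matrix-element products. -/
private def phiA {G H : Type*} [NormedAddCommGroup H] [InnerProductSpace ℂ H]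
    (U : G → (H ≃ₗᵢ[ℂ] H)) (a u v : H) (g : G) : ℂ :=
  (starRingEnd ℂ) (inner ℂ (U g a) u) * inner ℂ (U g a) v

/-- The integrand of the POM. -/
private def PhiA {G H : Type*} [NormedAddCommGroup H] [InnerProductSpace ℂ H]
    (U : G → (H ≃ₗᵢ[ℂ] H)) (T : H →L[ℂ] H) (u v : H) (g : G) : ℂ :=
  inner ℂ u (U g (T ((U g).symm v)))

/-- for a unimodular locally compact second countable group `G`, an irreducible
square-integrable representation `U` (with orthogonality constant 1), and a positive
trace-one operator `T` (given through its spectral decomposition `T = ∑ λₙ |eₙ⟩⟨eₙ|`),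
the weak integrals `E(X) = ∫_X U(g) T U(g)⁻¹ dμ(g)` form a normalized covariant POM. -/
theorem stmt14 {G : Type*} [Group G] [TopologicalSpace G] [IsTopologicalGroup G]
    [LocallyCompactSpace G] [SecondCountableTopology G] [T2Space G]
    [MeasurableSpace G] [BorelSpace G]
    (μ : Measure G) [μ.IsHaarMeasure] [μ.IsMulRightInvariant]
    {H : Type*} [NormedAddCommGroup H] [InnerProductSpace ℂ H] [CompleteSpace H]
    [TopologicalSpace.SeparableSpace H]
    (U : G → (H ≃ₗᵢ[ℂ] H))
    (hgrp : ∀ g g' : G, U (g * g') = (U g').trans (U g))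
    (hcont : ∀ v : H, Continuous fun g => U g v)
    (hirr : ∀ K : Submodule ℂ H, IsClosed (K : Set H) →
      (∀ g : G, ∀ v ∈ K, U g v ∈ K) → K = ⊥ ∨ K = ⊤)
    (hsq : ∀ u v : H, ∫ g, ‖(inner ℂ (U g u) v : ℂ)‖ ^ 2 ∂μ = ‖u‖ ^ 2 * ‖v‖ ^ 2)
    (T : H →L[ℂ] H) (lam : ℕ → ℝ) (e : ℕ → H)
    (hlam : ∀ n, 0 ≤ lam n) (hON : Orthonormal ℂ e) (htr : HasSum lam 1)
    (hT : ∀ v : H, HasSum (fun n => ((lam n : ℂ) * (inner ℂ (e n) v : ℂ)) • e n) (T v))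
    (E : Set G → (H →L[ℂ] H))
    (hE : ∀ X : Set G, MeasurableSet X → ∀ u v : H,
      (inner ℂ u (E X v) : ℂ) = ∫ g in X, (inner ℂ u (U g (T ((U g).symm v))) : ℂ) ∂μ) :
    (∀ X : Set G, MeasurableSet X → (E X).IsPositive) ∧
    E Set.univ = 1 ∧
    (∀ X : ℕ → Set G, (∀ n, MeasurableSet (X n)) → Pairwise (Function.onFun Disjoint X) →
      ∀ f g : H, HasSum (fun n => (inner ℂ (E (X n) f) g : ℂ))
        (inner ℂ (E (⋃ n, X n) f) g)) ∧
    (∀ g₀ : G, ∀ X : Set G, MeasurableSet X → ∀ v : H,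
      U g₀ (E X ((U g₀).symm v)) = E ((g₀ * ·) '' X) v) := by
  classical
  -- restate hE in terms of PhiA
  have hE' : ∀ X : Set G, MeasurableSet X → ∀ u v : H,
      (inner ℂ u (E X v) : ℂ) = ∫ g in X, PhiA U T u v g ∂μ := hE
  -- basic facts about the representation
  have hU1 : ∀ v : H, U 1 v = v := by
    intro v
    have h := congrArg (fun (f : H ≃ₗᵢ[ℂ] H) => f v) (hgrp 1 1)
    simp only [one_mul, LinearIsometryEquiv.trans_apply] at h
    exact (U 1).injective h.symm
  have hU1s : ∀ v : H, (U 1).symm v = v := by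
    intro v
    have h := (U 1).apply_symm_apply v
    rw [hU1 ((U 1).symm v)] at h
    exact h
  have hsymm : ∀ (g : G) (v : H), (U g).symm v = U g⁻¹ v := by
    intro g v
    apply (U g).injective
    rw [(U g).apply_symm_apply]
    have h := congrArg (fun (f : H ≃ₗᵢ[ℂ] H) => f v) (hgrp g g⁻¹)
    simp only [mul_inv_cancel, LinearIsometryEquiv.trans_apply] at h
    rw [hU1 v] at h
    exact h
  -- moving an isometry across the inner ℂ product
  have hinL : ∀ (g : G) (x v : H), (inner ℂ (U g x) v : ℂ) = inner ℂ x ((U g).symm v) := by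
    intro g x v
    conv_lhs => rw [← (U g).apply_symm_apply v]
    rw [(U g).inner_map_map]
  have hinR : ∀ (g : G) (u y : H), (inner ℂ u (U g y) : ℂ) = inner ℂ ((U g).symm u) y := by
    intro g u y
    conv_lhs => rw [← (U g).apply_symm_apply u]
    rw [(U g).inner_map_map]
  have φcont : ∀ a u v : H, Continuous (phiA U a u v) := by
    intro a u v
    have h1 : Continuous fun g => (inner ℂ (U g a) u : ℂ) :=
      Continuous.inner (hcont a) continuous_const
    have h2 : Continuous fun g => (inner ℂ (U g a) v : ℂ) :=
      Continuous.inner (hcont a) continuous_const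
    exact (continuous_conj.comp h1).mul h2
  -- square integrability of matrix elements
  have A0 : ∀ a u : H, Integrable (fun g => ‖(inner ℂ (U g a) u : ℂ)‖ ^ 2) μ := by
    intro a u
    rcases eq_or_ne a 0 with rfl | ha
    · simp only [map_zero, inner_zero_left, norm_zero]
      simpa using integrable_zero G ℝ μ
    rcases eq_or_ne u 0 with rfl | hu
    · simp only [inner_zero_right, norm_zero]
      simpa using integrable_zero G ℝ μ
    by_contra hni
    have h0 := integral_undef hni
    rw [hsq a u] at h0
    exact (mul_ne_zero (pow_ne_zero 2 (norm_ne_zero_iff.2 ha))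
      (pow_ne_zero 2 (norm_ne_zero_iff.2 hu))) h0
  -- polarized orthogonality relations
  have hpt : ∀ a u v : H, ∀ g : G, phiA U a u v g =
      (((‖(inner ℂ (U g a) (u + v) : ℂ)‖ ^ 2 : ℝ) : ℂ) -
        ((‖(inner ℂ (U g a) (u - v) : ℂ)‖ ^ 2 : ℝ) : ℂ) +
        (((‖(inner ℂ (U g a) (u - I • v) : ℂ)‖ ^ 2 : ℝ) : ℂ) -
          ((‖(inner ℂ (U g a) (u + I • v) : ℂ)‖ ^ 2 : ℝ) : ℂ)) * I) / 4 := by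
    intro a u v g
    have e1 : (inner ℂ (U g a) (u + v) : ℂ) = inner ℂ (U g a) u + inner ℂ (U g a) v :=
      inner_add_right _ _ _
    have e2 : (inner ℂ (U g a) (u - v) : ℂ) = inner ℂ (U g a) u - inner ℂ (U g a) v :=
      inner_sub_right _ _ _
    have e3 : (inner ℂ (U g a) (u - I • v) : ℂ) =
        inner ℂ (U g a) u - I * inner ℂ (U g a) v := by
      rw [inner_sub_right, inner_smul_right]
    have e4 : (inner ℂ (U g a) (u + I • v) : ℂ) =
        inner ℂ (U g a) u + I * inner ℂ (U g a) v := by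
      rw [inner_add_right, inner_smul_right]
    rw [e1, e2, e3, e4]
    exact conj_mul_eq_combo _ _
  have orthI : ∀ a u v : H, Integrable (phiA U a u v) μ := by
    intro a u v
    have hint : Integrable (fun g =>
        (((‖(inner ℂ (U g a) (u + v) : ℂ)‖ ^ 2 : ℝ) : ℂ) -
          ((‖(inner ℂ (U g a) (u - v) : ℂ)‖ ^ 2 : ℝ) : ℂ) +
          (((‖(inner ℂ (U g a) (u - I • v) : ℂ)‖ ^ 2 : ℝ) : ℂ) -
            ((‖(inner ℂ (U g a) (u + I • v) : ℂ)‖ ^ 2 : ℝ) : ℂ)) * I) / 4) μ :=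
      (((A0 a (u + v)).ofReal.sub (A0 a (u - v)).ofReal).add
        (((A0 a (u - I • v)).ofReal.sub (A0 a (u + I • v)).ofReal).mul_const I)).div_const 4
    exact hint.congr (Filter.EventuallyEq.of_eq (funext fun g => (hpt a u v g).symm))
  have orthV : ∀ a u v : H, ∫ g, phiA U a u v g ∂μ = ((‖a‖ ^ 2 : ℝ) : ℂ) * inner ℂ u v := by
    intro a u v
    rw [integral_congr_ae (Filter.EventuallyEq.of_eq (funext (hpt a u v)))]
    rw [integral_combo (A0 a (u + v)) (A0 a (u - v)) (A0 a (u - I • v)) (A0 a (u + I • v))]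
    rw [hsq a (u + v), hsq a (u - v), hsq a (u - I • v), hsq a (u + I • v)]
    rw [inner_eq_combo u v]
    push_cast
    ring
  -- pointwise expansion of the integrand of E
  have hsum : ∀ (u v : H) (g : G),
      HasSum (fun n => (lam n : ℂ) * phiA U (e n) u v g) (PhiA U T u v g) := by
    intro u v g
    have h1 := (hT ((U g).symm v)).mapL
      (((U g).toContinuousLinearEquiv : H ≃L[ℂ] H) : H →L[ℂ] H)
    have h2 := h1.mapL (innerSL ℂ u)
    have he : (fun n => (innerSL ℂ u)
        ((((U g).toContinuousLinearEquiv : H ≃L[ℂ] H) : H →L[ℂ] H)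
          (((lam n : ℂ) * (inner ℂ (e n) ((U g).symm v) : ℂ)) • e n))) =
        fun n => (lam n : ℂ) * phiA U (e n) u v g := by
      funext n
      show (inner ℂ u (U g (((lam n : ℂ) * (inner ℂ (e n) ((U g).symm v) : ℂ)) • e n)) : ℂ) =
        (lam n : ℂ) * phiA U (e n) u v g
      rw [_root_.map_smul (U g) _ (e n), inner_smul_right]
      have hc2 : (inner ℂ (e n) ((U g).symm v) : ℂ) = inner ℂ (U g (e n)) v :=
        (hinL g (e n) v).symm
      have hc3 : (inner ℂ u (U g (e n)) : ℂ) = (starRingEnd ℂ) (inner ℂ (U g (e n)) u) :=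
        (inner_conj_symm _ _).symm
      rw [hc2, hc3]
      simp only [phiA]
      ring
    have hv : (innerSL ℂ u)
        ((((U g).toContinuousLinearEquiv : H ≃L[ℂ] H) : H →L[ℂ] H) (T ((U g).symm v))) =
        PhiA U T u v g := rfl
    rw [he, hv] at h2
    exact h2
  -- symmetry of T
  have hTsum : ∀ p q : H, HasSum (fun n =>
      (lam n : ℂ) * ((starRingEnd ℂ) (inner ℂ (e n) p) * (inner ℂ (e n) q : ℂ)))
      (inner ℂ p (T q) : ℂ) := by
    intro p q
    have h := hsum p q 1
    have he2 : (fun n => (lam n : ℂ) * phiA U (e n) p q 1) =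
        fun n => (lam n : ℂ) * ((starRingEnd ℂ) (inner ℂ (e n) p) * (inner ℂ (e n) q : ℂ)) := by
      funext n
      show (lam n : ℂ) * ((starRingEnd ℂ) (inner ℂ (U 1 (e n)) p) * (inner ℂ (U 1 (e n)) q : ℂ)) = _
      rw [hU1 (e n)]
    have hv2 : PhiA U T p q 1 = (inner ℂ p (T q) : ℂ) := by
      show (inner ℂ p (U 1 (T ((U 1).symm q))) : ℂ) = inner ℂ p (T q)
      rw [hU1s q, hU1]
    rw [he2, hv2] at h
    exact h
  have Tsym : ∀ p q : H, (inner ℂ (T p) q : ℂ) = inner ℂ p (T q) := by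
    intro p q
    rw [← inner_conj_symm (T p) q]
    have h1 := (hTsum q p).mapL (Complex.conjCLE : ℂ ≃L[ℝ] ℂ).toContinuousLinearMap
    have he : (fun n => (Complex.conjCLE : ℂ ≃L[ℝ] ℂ).toContinuousLinearMap
        ((lam n : ℂ) * ((starRingEnd ℂ) (inner ℂ (e n) q) * (inner ℂ (e n) p : ℂ)))) =
        fun n => (lam n : ℂ) * ((starRingEnd ℂ) (inner ℂ (e n) p) * (inner ℂ (e n) q : ℂ)) := by
      funext n
      show (starRingEnd ℂ) ((lam n : ℂ) * ((starRingEnd ℂ) (inner ℂ (e n) q) *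
          (inner ℂ (e n) p : ℂ))) =
        (lam n : ℂ) * ((starRingEnd ℂ) (inner ℂ (e n) p) * (inner ℂ (e n) q : ℂ))
      simp only [map_mul, Complex.conj_conj, Complex.conj_ofReal]
      ring
    have hv : (Complex.conjCLE : ℂ ≃L[ℝ] ℂ).toContinuousLinearMap (inner ℂ q (T p) : ℂ) =
        (starRingEnd ℂ) (inner ℂ q (T p) : ℂ) := rfl
    rw [he, hv] at h1
    exact h1.unique (hTsum p q)
  -- norm bounds on the terms
  have hφnorm : ∀ a u v : H, ∀ g : G, ‖phiA U a u v g‖ ≤ ‖a‖ ^ 2 * (‖u‖ * ‖v‖) := by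
    intro a u v g
    show ‖(starRingEnd ℂ) (inner ℂ (U g a) u) * (inner ℂ (U g a) v : ℂ)‖ ≤ _
    rw [norm_mul, RCLike.norm_conj]
    have h1 : ‖(inner ℂ (U g a) u : ℂ)‖ ≤ ‖a‖ * ‖u‖ := by
      have := norm_inner_le_norm (𝕜 := ℂ) (U g a) u
      rwa [(U g).norm_map] at this
    have h2 : ‖(inner ℂ (U g a) v : ℂ)‖ ≤ ‖a‖ * ‖v‖ := by
      have := norm_inner_le_norm (𝕜 := ℂ) (U g a) v
      rwa [(U g).norm_map] at this
    calc ‖(inner ℂ (U g a) u : ℂ)‖ * ‖(inner ℂ (U g a) v : ℂ)‖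
        ≤ (‖a‖ * ‖u‖) * (‖a‖ * ‖v‖) :=
          mul_le_mul h1 h2 (norm_nonneg _) (by positivity)
      _ = ‖a‖ ^ 2 * (‖u‖ * ‖v‖) := by ring
  have hφsq : ∀ a u v : H, ∀ g : G, ‖phiA U a u v g‖ ≤
      (‖(inner ℂ (U g a) u : ℂ)‖ ^ 2 + ‖(inner ℂ (U g a) v : ℂ)‖ ^ 2) / 2 := by
    intro a u v g
    show ‖(starRingEnd ℂ) (inner ℂ (U g a) u) * (inner ℂ (U g a) v : ℂ)‖ ≤ _
    rw [norm_mul, RCLike.norm_conj]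
    nlinarith [sq_nonneg (‖(inner ℂ (U g a) u : ℂ)‖ - ‖(inner ℂ (U g a) v : ℂ)‖),
      norm_nonneg (inner ℂ (U g a) u : ℂ), norm_nonneg (inner ℂ (U g a) v : ℂ)]
  have hφint : ∀ a u v : H, ∫ g, ‖phiA U a u v g‖ ∂μ ≤
      (‖a‖ ^ 2 * ‖u‖ ^ 2 + ‖a‖ ^ 2 * ‖v‖ ^ 2) / 2 := by
    intro a u v
    have h := integral_mono (orthI a u v).norm (((A0 a u).add (A0 a v)).div_const 2)
      (fun g => hφsq a u v g)
    calc ∫ g, ‖phiA U a u v g‖ ∂μ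
        ≤ ∫ g, (‖(inner ℂ (U g a) u : ℂ)‖ ^ 2 + ‖(inner ℂ (U g a) v : ℂ)‖ ^ 2) / 2 ∂μ := h
      _ = (‖a‖ ^ 2 * ‖u‖ ^ 2 + ‖a‖ ^ 2 * ‖v‖ ^ 2) / 2 := by
          rw [integral_div, integral_add (A0 a u) (A0 a v), hsq a u, hsq a v]
  have Φrw : ∀ u v : H, ∀ g : G, PhiA U T u v g =
      inner ℂ ((U g).symm u) (T ((U g).symm v)) := by
    intro u v g
    exact hinR g u (T ((U g).symm v))
  have Φcont : ∀ u v : H, Continuous (PhiA U T u v) := by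
    intro u v
    have h : (PhiA U T u v) = fun g => (inner ℂ ((U g).symm u) (T ((U g).symm v)) : ℂ) :=
      funext (Φrw u v)
    rw [h]
    have hs : ∀ w : H, Continuous fun g => (U g).symm w := by
      intro w
      have : (fun g => (U g).symm w) = fun g => U g⁻¹ w := funext fun g => hsymm g w
      rw [this]
      exact (hcont w).comp continuous_inv
    exact Continuous.inner (hs u) (T.continuous.comp (hs v))
  -- summability of the term norms
  have hsummable : ∀ u v : H, ∀ g : G,
      Summable fun n => ‖(lam n : ℂ) * phiA U (e n) u v g‖ := by
    intro u v g
    apply Summable.of_nonneg_of_le (fun n => norm_nonneg _)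
      (fun n => ?_) (htr.summable.mul_right (‖u‖ * ‖v‖))
    rw [norm_mul]
    have h1 : ‖((lam n : ℝ) : ℂ)‖ = lam n := by
      rw [Complex.norm_real, Real.norm_eq_abs, _root_.abs_of_nonneg (hlam n)]
    rw [h1]
    have h2 := hφnorm (e n) u v g
    rw [hON.1 n] at h2
    simp only [one_pow, one_mul] at h2
    exact mul_le_mul_of_nonneg_left h2 (hlam n)
  -- lintegral bound for each term
  have hlin : ∀ u v : H, ∀ n : ℕ,
      (∫⁻ g, ‖(lam n : ℂ) * phiA U (e n) u v g‖₊ ∂μ) ≤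
        ENNReal.ofReal (lam n * ((‖u‖ ^ 2 + ‖v‖ ^ 2) / 2)) := by
    intro u v n
    have hint : Integrable (fun g => (lam n : ℂ) * phiA U (e n) u v g) μ :=
      (orthI (e n) u v).const_mul _
    rw [show (∫⁻ g, (‖(lam n : ℂ) * phiA U (e n) u v g‖₊ : ENNReal) ∂μ) = ENNReal.ofReal (∫ g, ‖(lam n : ℂ) * phiA U (e n) u v g‖ ∂μ) from (ofReal_integral_norm_eq_lintegral_enorm hint).symm]
    apply ENNReal.ofReal_le_ofReal
    have h1 : ∫ g, ‖(lam n : ℂ) * phiA U (e n) u v g‖ ∂μ =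
        lam n * ∫ g, ‖phiA U (e n) u v g‖ ∂μ := by
      have heq : (fun g => ‖(lam n : ℂ) * phiA U (e n) u v g‖) =
          fun g => lam n * ‖phiA U (e n) u v g‖ := by
        funext g
        rw [norm_mul, Complex.norm_real, Real.norm_eq_abs, _root_.abs_of_nonneg (hlam n)]
      rw [heq, integral_const_mul]
    rw [h1]
    have h2 := hφint (e n) u v
    rw [hON.1 n] at h2
    simp only [one_pow, one_mul] at h2
    exact mul_le_mul_of_nonneg_left h2 (hlam n)
  -- the sum of lintegrals is finite
  have hsumfin : ∀ u v : H,
      (∑' n, ∫⁻ g, ‖(lam n : ℂ) * phiA U (e n) u v g‖₊ ∂μ) ≠ ⊤ := by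
    intro u v
    have h1 : (∑' n, ∫⁻ g, ‖(lam n : ℂ) * phiA U (e n) u v g‖₊ ∂μ) ≤
        ∑' n, ENNReal.ofReal (lam n * ((‖u‖ ^ 2 + ‖v‖ ^ 2) / 2)) :=
      ENNReal.tsum_le_tsum (hlin u v)
    have h2 : (∑' n, ENNReal.ofReal (lam n * ((‖u‖ ^ 2 + ‖v‖ ^ 2) / 2))) =
        ENNReal.ofReal (∑' n, lam n * ((‖u‖ ^ 2 + ‖v‖ ^ 2) / 2)) :=
      (ENNReal.ofReal_tsum_of_nonneg
        (fun n => mul_nonneg (hlam n) (by positivity))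
        (htr.summable.mul_right _)).symm
    exact ne_top_of_le_ne_top (by rw [h2]; exact ENNReal.ofReal_ne_top) h1
  -- integrability of Φ
  have Φint : ∀ u v : H, Integrable (PhiA U T u v) μ := by
    intro u v
    refine ⟨(Φcont u v).aestronglyMeasurable, ?_⟩
    have hpoint : ∀ g : G, (‖PhiA U T u v g‖₊ : ENNReal) ≤
        ∑' n, (‖(lam n : ℂ) * phiA U (e n) u v g‖₊ : ENNReal) := by
      intro g
      have h1 : ‖PhiA U T u v g‖ ≤ ∑' n, ‖(lam n : ℂ) * phiA U (e n) u v g‖ := by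
        rw [← (hsum u v g).tsum_eq]
        exact norm_tsum_le_tsum_norm (hsummable u v g)
      calc (‖PhiA U T u v g‖₊ : ENNReal) = ENNReal.ofReal ‖PhiA U T u v g‖ :=
            (ofReal_norm_eq_enorm _).symm
        _ ≤ ENNReal.ofReal (∑' n, ‖(lam n : ℂ) * phiA U (e n) u v g‖) :=
            ENNReal.ofReal_le_ofReal h1
        _ = ∑' n, ENNReal.ofReal ‖(lam n : ℂ) * phiA U (e n) u v g‖ :=
            ENNReal.ofReal_tsum_of_nonneg (fun n => norm_nonneg _) (hsummable u v g)
        _ = ∑' n, (‖(lam n : ℂ) * phiA U (e n) u v g‖₊ : ENNReal) := by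
            exact tsum_congr fun n => ofReal_norm_eq_enorm _
    have hmeas : ∀ n : ℕ, AEMeasurable
        (fun g => (‖(lam n : ℂ) * phiA U (e n) u v g‖₊ : ENNReal)) μ := by
      intro n
      exact ((continuous_const.mul (φcont (e n) u v)).aestronglyMeasurable).enorm
    calc ∫⁻ g, ‖PhiA U T u v g‖₊ ∂μ
        ≤ ∫⁻ g, ∑' n, (‖(lam n : ℂ) * phiA U (e n) u v g‖₊ : ENNReal) ∂μ :=
          lintegral_mono hpoint
      _ = ∑' n, ∫⁻ g, (‖(lam n : ℂ) * phiA U (e n) u v g‖₊ : ENNReal) ∂μ :=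
          lintegral_tsum hmeas
      _ < ⊤ := lt_top_iff_ne_top.2 (hsumfin u v)
  -- the total integral
  have Φuniv : ∀ u v : H, ∫ g, PhiA U T u v g ∂μ = inner ℂ u v := by
    intro u v
    have h0 : (PhiA U T u v) = fun g => ∑' n, (lam n : ℂ) * phiA U (e n) u v g := by
      funext g
      exact (hsum u v g).tsum_eq.symm
    rw [h0]
    show ∫ g, ∑' n, (lam n : ℂ) * phiA U (e n) u v g ∂μ = inner ℂ u v
    rw [integral_tsum (f := fun n g => (lam n : ℂ) * phiA U (e n) u v g)
      (fun n => (continuous_const.mul (φcont (e n) u v)).aestronglyMeasurable)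
      (hsumfin u v)]
    have h1 : ∀ n : ℕ, ∫ g, (lam n : ℂ) * phiA U (e n) u v g ∂μ =
        (lam n : ℂ) * inner ℂ u v := by
      intro n
      rw [integral_const_mul, orthV (e n) u v, hON.1 n]
      push_cast
      ring
    simp_rw [h1]
    have h2 : HasSum (fun n => (lam n : ℂ) * inner ℂ u v) ((1 : ℂ) * inner ℂ u v) :=
      (hasSum_ofReal.mpr htr).mul_right _
    rw [h2.tsum_eq, one_mul]
  -- positivity pointwise : Φ v v g is a nonnegative real
  have Φpos : ∀ v : H, ∀ g : G, ∃ r : ℝ, 0 ≤ r ∧ PhiA U T v v g = (r : ℂ) := by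
    intro v g
    have hterm : ∀ n : ℕ, (lam n : ℂ) * phiA U (e n) v v g =
        ((lam n * ‖(inner ℂ (U g (e n)) v : ℂ)‖ ^ 2 : ℝ) : ℂ) := by
      intro n
      have hz : (starRingEnd ℂ) (inner ℂ (U g (e n)) v : ℂ) * (inner ℂ (U g (e n)) v : ℂ) =
          ((‖(inner ℂ (U g (e n)) v : ℂ)‖ ^ 2 : ℝ) : ℂ) := by
        rw [mul_comm, Complex.mul_conj']
        norm_cast
      show (lam n : ℂ) * ((starRingEnd ℂ) (inner ℂ (U g (e n)) v) * (inner ℂ (U g (e n)) v : ℂ)) = _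
      rw [hz]
      push_cast
      ring
    have hsummable2 : Summable fun n => lam n * ‖(inner ℂ (U g (e n)) v : ℂ)‖ ^ 2 := by
      apply Summable.of_nonneg_of_le (fun n => mul_nonneg (hlam n) (sq_nonneg _))
        (fun n => ?_) (htr.summable.mul_right (‖v‖ ^ 2))
      have h2 : ‖(inner ℂ (U g (e n)) v : ℂ)‖ ≤ ‖v‖ := by
        have := norm_inner_le_norm (𝕜 := ℂ) (U g (e n)) v
        rwa [(U g).norm_map, hON.1 n, one_mul] at this
      exact mul_le_mul_of_nonneg_left
        (pow_le_pow_left₀ (norm_nonneg _) h2 2) (hlam n)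
    refine ⟨∑' n, lam n * ‖(inner ℂ (U g (e n)) v : ℂ)‖ ^ 2,
      tsum_nonneg (fun n => mul_nonneg (hlam n) (sq_nonneg _)), ?_⟩
    have h3 : HasSum (fun n => ((lam n * ‖(inner ℂ (U g (e n)) v : ℂ)‖ ^ 2 : ℝ) : ℂ))
        (((∑' n, lam n * ‖(inner ℂ (U g (e n)) v : ℂ)‖ ^ 2 : ℝ) : ℂ)) :=
      hasSum_ofReal.mpr hsummable2.hasSum
    have h4 := hsum v v g
    rw [show (fun n => (lam n : ℂ) * phiA U (e n) v v g) =
      (fun n => ((lam n * ‖(inner ℂ (U g (e n)) v : ℂ)‖ ^ 2 : ℝ) : ℂ)) from funext hterm] at h4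
    exact h4.unique h3
  -- symmetry of each E X
  have Esym : ∀ X : Set G, MeasurableSet X → ∀ x y : H,
      (inner ℂ (E X x) y : ℂ) = inner ℂ x (E X y) := by
    intro X hX x y
    rw [← inner_conj_symm (E X x) y, hE' X hX y x, hE' X hX x y, ← integral_conj]
    apply integral_congr_ae
    apply Filter.EventuallyEq.of_eq
    funext g
    show (starRingEnd ℂ) (PhiA U T y x g) = PhiA U T x y g
    rw [Φrw y x g, Φrw x y g, ← Tsym, inner_conj_symm]
  constructor
  · -- positivity
    intro X hX
    constructor
    · intro x y
      exact Esym X hX x y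
    · intro x
      show (0 : ℝ) ≤ RCLike.re (inner ℂ (E X x) x : ℂ)
      rw [← inner_conj_symm (E X x) x]
      rw [hE' X hX x x]
      have hrc : RCLike.re ((starRingEnd ℂ) (∫ g in X, PhiA U T x x g ∂μ)) =
          RCLike.re (∫ g in X, PhiA U T x x g ∂μ) := by
        simp [Complex.conj_re]
      rw [hrc]
      rw [← integral_re ((Φint x x).integrableOn)]
      apply setIntegral_nonneg hX
      intro g _
      obtain ⟨r, hr0, hrg⟩ := Φpos x g
      show (0 : ℝ) ≤ RCLike.re (PhiA U T x x g)
      rw [hrg]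
      simpa using hr0
  constructor
  · -- normalization
    ext v
    apply ext_inner_left ℂ
    intro u
    rw [show ((1 : H →L[ℂ] H) v) = v from rfl]
    rw [hE' Set.univ MeasurableSet.univ u v]
    rw [Measure.restrict_univ]
    exact Φuniv u v
  constructor
  · -- σ-additivity
    intro X hm hd f g'
    have h1 := hasSum_integral_iUnion hm hd ((Φint g' f).integrableOn)
    have h2 := h1.mapL (Complex.conjCLE : ℂ ≃L[ℝ] ℂ).toContinuousLinearMap
    have he : (fun n => (Complex.conjCLE : ℂ ≃L[ℝ] ℂ).toContinuousLinearMap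
        (∫ g in X n, PhiA U T g' f g ∂μ)) = fun n => (inner ℂ (E (X n) f) g' : ℂ) := by
      funext n
      show (starRingEnd ℂ) (∫ g in X n, PhiA U T g' f g ∂μ) = (inner ℂ (E (X n) f) g' : ℂ)
      rw [← hE' (X n) (hm n) g' f, inner_conj_symm]
    have hv : (Complex.conjCLE : ℂ ≃L[ℝ] ℂ).toContinuousLinearMap
        (∫ g in ⋃ n, X n, PhiA U T g' f g ∂μ) = (inner ℂ (E (⋃ n, X n) f) g' : ℂ) := by
      show (starRingEnd ℂ) (∫ g in ⋃ n, X n, PhiA U T g' f g ∂μ) =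
        (inner ℂ (E (⋃ n, X n) f) g' : ℂ)
      rw [← hE' (⋃ n, X n) (MeasurableSet.iUnion hm) g' f, inner_conj_symm]
    rw [he, hv] at h2
    exact h2
  · -- covariance
    intro g₀ X hX v
    apply ext_inner_left ℂ
    intro u
    have hemb : MeasurableEmbedding (fun g => g₀ * g) :=
      (Homeomorph.mulLeft g₀).toMeasurableEquiv.measurableEmbedding
    have himg : MeasurableSet ((g₀ * ·) '' X) := hemb.measurableSet_image' hX
    rw [hinR g₀ u (E X ((U g₀).symm v))]
    rw [hE' X hX ((U g₀).symm u) ((U g₀).symm v)]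
    rw [hE' ((g₀ * ·) '' X) himg u v]
    rw [show ((g₀ * ·) '' X) = (fun g => g₀ * g) '' X from rfl]
    rw [(measurePreserving_mul_left μ g₀).setIntegral_image_emb hemb
      (fun g => PhiA U T u v g) X]
    apply setIntegral_congr_ae hX
    apply Filter.Eventually.of_forall
    intro g _
    have hs2 : (U (g₀ * g)).symm v = (U g).symm ((U g₀).symm v) := by
      rw [hgrp g₀ g]
      rfl
    show PhiA U T ((U g₀).symm u) ((U g₀).symm v) g = PhiA U T u v (g₀ * g)
    show (inner ℂ ((U g₀).symm u) (U g (T ((U g).symm ((U g₀).symm v)))) : ℂ) =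
      inner ℂ u (U (g₀ * g) (T ((U (g₀ * g)).symm v)))
    rw [hs2]
    rw [show U (g₀ * g) (T ((U g).symm ((U g₀).symm v))) =
      U g₀ (U g (T ((U g).symm ((U g₀).symm v)))) from by rw [hgrp g₀ g]; rfl]
    rw [hinR g₀ u]
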